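/- Suppose F = f + h is uniformly convex of degree q ≥ 2 with parameter σ_q > 0. Let H = βL_p with β > 1, let x ∈ dom h, and let T be a minimizer over E of y ↦ Ω_p(f,x;y) + (H/(p+1)!)‖y−x‖^{p+1} + h(y). Then for every subgradient g ∈ ∂h(x): ‖∇f(x) + g‖ ≥ σ_q·‖x − T‖^{q−1}; consequently η(x) ≥ σ_q·‖x − T‖^{q−1}. -/

import Mathlib

open scoped RealInnerProductSpace

open Set Filter Topology

section Auxiliary


lemma deriv_le_of_slope_le {φ : ℝ → ℝ} {c K : ℝ} (hd : HasDerivAt φ c 0)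
    (hb : ∀ t ∈ Set.Ioc (0:ℝ) 1, (φ t - φ 0) / t ≤ K) : c ≤ K := by
  have h1 : Filter.Tendsto (slope φ 0) (𝓝[>] 0) (𝓝 c) :=
    (hasDerivAt_iff_tendsto_slope.mp hd).mono_left
      (nhdsWithin_mono 0 (fun t ht => ne_of_gt ht))
  refine le_of_tendsto h1 ?_
  filter_upwards [Ioc_mem_nhdsGT one_pos] with t ht
  have := hb t ht
  simpa [slope_def_field, div_eq_inv_mul] using this

lemma deriv_ge_of_slope_ge {φ : ℝ → ℝ} {c K : ℝ} (hd : HasDerivAt φ c 0)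
    (hb : ∀ t ∈ Set.Ioc (0:ℝ) 1, K ≤ (φ t - φ 0) / t) : K ≤ c := by
  have h := deriv_le_of_slope_le (φ := fun t => -φ t) (c := -c) (K := -K) hd.neg ?_
  · linarith
  · intro t ht
    have := hb t ht
    have h2 : (-φ t - -φ 0) / t = -((φ t - φ 0)/t) := by ring
    rw [h2]; linarith

lemma fderiv_le_of_convexOn {E : Type*} [NormedAddCommGroup E] [InnerProductSpace ℝ E]
    {U : Set E} (hUconv : Convex ℝ U) {f : E → ℝ}
    (hfconv : ConvexOn ℝ U f) {a y : E} (ha : a ∈ U) (hy : y ∈ U)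
    (hd : DifferentiableAt ℝ f a) : fderiv ℝ f a (y - a) ≤ f y - f a := by
  have hcurve : HasDerivAt (fun t : ℝ => a + t • (y - a)) (y - a) 0 := by
    simpa using ((hasDerivAt_id (0:ℝ)).smul_const (y - a)).const_add a
  have hline : HasDerivAt (fun t : ℝ => f (a + t • (y - a))) (fderiv ℝ f a (y - a)) 0 := by
    have hd' : HasFDerivAt f (fderiv ℝ f a) (a + (0:ℝ) • (y - a)) := by
      simpa using hd.hasFDerivAt
    exact hd'.comp_hasDerivAt 0 hcurve
  apply deriv_le_of_slope_le hline
  intro t ht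
  have hmem : a + t • (y - a) = (1 - t) • a + t • y := by
    rw [smul_sub, sub_smul, one_smul]; abel
  have hcvx := hfconv.2 ha hy (by linarith [ht.2] : (0:ℝ) ≤ 1 - t) (le_of_lt ht.1)
    (by ring)
  rw [div_le_iff₀ ht.1]
  rw [hmem]
  have h0 : a + (0:ℝ) • (y - a) = a := by simp
  calc f ((1-t) • a + t • y) - f (a + (0:ℝ) • (y-a)) ≤ (1-t) * f a + t * f y - f a := by
        rw [h0]; simp only [smul_eq_mul] at hcvx; linarith [hcvx]
    _ = (f y - f a) * t := by ring

lemma curve_hasDerivAt {E : Type*} [NormedAddCommGroup E] [InnerProductSpace ℝ E]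
    {U : Set E} (hU : IsOpen U) {f : E → ℝ} {p k : ℕ}
    (hf : ContDiffOn ℝ (p : ℕ∞) f U) (hk : k < p) (x d : E) {t : ℝ} (ht : x + t • d ∈ U) :
    HasDerivAt (fun s : ℝ => iteratedFDeriv ℝ k f (x + s • d) (fun _ => d))
      (iteratedFDeriv ℝ (k+1) f (x + t • d) (fun _ => d)) t := by
  have hdiff : DifferentiableAt ℝ (iteratedFDeriv ℝ k f) (x + t • d) := by
    have h1 := hf.differentiableOn_iteratedFDerivWithin (m := k)
      (by exact_mod_cast hk) hU.uniqueDiffOn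
    have h2 : DifferentiableWithinAt ℝ (iteratedFDeriv ℝ k f) U (x + t • d) :=
      (h1 _ ht).congr (fun y hy => (iteratedFDerivWithin_of_isOpen k hU hy).symm)
        ((iteratedFDerivWithin_of_isOpen k hU ht).symm)
    exact h2.differentiableAt (hU.mem_nhds ht)
  have hcurve : HasDerivAt (fun s : ℝ => x + s • d) d t := by
    simpa using ((hasDerivAt_id t).smul_const d).const_add x
  have h3 : HasDerivAt (fun s : ℝ => iteratedFDeriv ℝ k f (x + s • d))
      (fderiv ℝ (iteratedFDeriv ℝ k f) (x + t • d) d) t :=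
    hdiff.hasFDerivAt.comp_hasDerivAt t hcurve
  have h4 := ((ContinuousMultilinearMap.apply ℝ (fun _ : Fin k => E) ℝ
      (fun _ => d)).hasFDerivAt.comp_hasDerivAt t h3)
  exact h4.congr_deriv (by rw [iteratedFDeriv_succ_apply_left]; rfl)

lemma line_taylor_bound {E : Type*} [NormedAddCommGroup E] [InnerProductSpace ℝ E]
    {U : Set E} (hU : IsOpen U) {f : E → ℝ} {p : ℕ} (hp : 2 ≤ p)
    (hf : ContDiffOn ℝ (p : ℕ∞) f U) (x d : E) {Λ : ℝ}
    (hseg : ∀ t ∈ Icc (0:ℝ) 1, x + t • d ∈ U)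
    (hlip : ∀ t ∈ Icc (0:ℝ) 1,
      |iteratedFDeriv ℝ p f (x + t • d) (fun _ => d)
        - iteratedFDeriv ℝ p f x (fun _ => d)| ≤ Λ * t) :
    |iteratedFDeriv ℝ 1 f (x + d) (fun _ => d)
      - ∑ j ∈ Finset.Icc 1 p, iteratedFDeriv ℝ j f x (fun _ => d) / ((j-1).factorial : ℝ)|
      ≤ Λ / (p.factorial : ℝ) := by
  set G : ℕ → ℝ → ℝ := fun k t => iteratedFDeriv ℝ k f (x + t • d) (fun _ => d) with hGdef
  set R : ℕ → ℝ → ℝ :=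
    fun k t => G k t - ∑ j ∈ Finset.Icc k p, G j 0 * t^(j-k) / ((j-k).factorial : ℝ) with hRdef
  have hR0 : ∀ k, k ≤ p → R k 0 = 0 := by
    intro k hk
    have hsum : (∑ j ∈ Finset.Icc k p, G j 0 * (0:ℝ)^(j-k) / ((j-k).factorial : ℝ)) = G k 0 := by
      rw [Finset.sum_eq_single k]
      · simp
      · intro j hj hne
        have : j - k ≠ 0 := by
          simp only [Finset.mem_Icc] at hj; omega
        simp [zero_pow this]
      · intro hk'
        exact absurd (Finset.mem_Icc.mpr ⟨le_refl k, hk⟩) hk'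
    simp [hRdef, hsum]
  have hRd : ∀ k, 1 ≤ k → k < p → ∀ t ∈ Icc (0:ℝ) 1, HasDerivAt (R k) (R (k+1) t) t := by
    intro k hk1 hkp t ht
    have hG := curve_hasDerivAt hU hf hkp x d (hseg t ht)
    have hcons : Finset.Icc k p = insert k (Finset.Icc (k+1) p) := by
      ext j; simp only [Finset.mem_Icc, Finset.mem_insert]; omega
    have hnot : k ∉ Finset.Icc (k+1) p := by simp
    have hterm : ∀ j ∈ Finset.Icc (k+1) p,
        HasDerivAt (fun s : ℝ => G j 0 * s^(j-k)/((j-k).factorial : ℝ))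
          (G j 0 * t^(j-(k+1))/((j-(k+1)).factorial : ℝ)) t := by
      intro j hj
      have hm : 1 ≤ j - k := by simp only [Finset.mem_Icc] at hj; omega
      have h1 := ((hasDerivAt_pow (j-k) t).const_mul (G j 0)).div_const
        ((j-k).factorial : ℝ)
      refine h1.congr_deriv ?_
      have e : j - (k+1) = j - k - 1 := by omega
      rw [e]
      have hnat := Nat.mul_factorial_pred (show j-k ≠ 0 by omega)
      have hfac : ((j-k).factorial : ℝ) = ((j-k : ℕ) : ℝ) * ((j-k-1).factorial : ℝ) := by
        exact_mod_cast hnat.symm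
      rw [hfac]
      have hne : ((j - k : ℕ) : ℝ) ≠ 0 := Nat.cast_ne_zero.mpr (by omega)
      have hne2 : ((j-k-1).factorial : ℝ) ≠ 0 := by positivity
      field_simp
    have hconst : HasDerivAt (fun s : ℝ => G k 0 * s^(k-k)/((k-k).factorial : ℝ)) 0 t := by
      simp only [Nat.sub_self, pow_zero, Nat.factorial_zero, Nat.cast_one, mul_one, div_one]
      exact hasDerivAt_const t _
    have hpoly : HasDerivAt
        (fun s : ℝ => ∑ j ∈ Finset.Icc k p, G j 0 * s^(j-k) / ((j-k).factorial : ℝ))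
        (∑ j ∈ Finset.Icc (k+1) p, G j 0 * t^(j-(k+1)) / ((j-(k+1)).factorial : ℝ)) t := by
      simp only [hcons, Finset.sum_insert hnot]
      have := hconst.fun_add (HasDerivAt.fun_sum hterm)
      simpa using this
    simpa [hRdef] using hG.fun_sub hpoly
  have hInd : ∀ j, j < p → ∀ t ∈ Icc (0:ℝ) 1,
      |R (p - j) t| ≤ Λ * t^(j+1) / ((j+1).factorial : ℝ) := by
    intro j
    induction j with
    | zero =>
      intro _ t ht
      have hRp : R p t = G p t - G p 0 := by
        simp [hRdef, Finset.Icc_self]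
      rw [Nat.sub_zero, hRp]
      have h2 := hlip t ht
      have e : Λ * t^(0+1)/((0+1).factorial : ℝ) = Λ * t := by norm_num
      rw [e]
      simp only [hGdef, zero_smul, add_zero]
      exact h2
    | succ j ih =>
      intro hj t ht
      have hk1 : 1 ≤ p - (j+1) := by omega
      have hkp : p - (j+1) < p := by omega
      have hk2 : p - (j+1) + 1 = p - j := by omega
      have key := image_norm_le_of_norm_deriv_right_le_deriv_boundary
        (f := R (p - (j+1))) (f' := fun s => R (p - j) s) (a := 0) (b := 1)
        (B := fun s => Λ * s^(j+2) / ((j+2).factorial : ℝ))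
        (B' := fun s => Λ * s^(j+1) / ((j+1).factorial : ℝ))
        ?_ ?_ ?_ ?_ ?_ ht
      · calc |R (p - (j+1)) t| = ‖R (p - (j+1)) t‖ := (Real.norm_eq_abs _).symm
          _ ≤ Λ * t^(j+2) / ((j+2).factorial : ℝ) := key
          _ = Λ * t^(j+1+1) / ((j+1+1).factorial : ℝ) := by norm_num
      · intro s hs
        exact (hRd _ hk1 hkp s hs).continuousAt.continuousWithinAt
      · intro s hs
        have := hRd _ hk1 hkp s (Ico_subset_Icc_self hs)
        rw [hk2] at this
        exact this.hasDerivWithinAt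
      · rw [hR0 _ (by omega)]
        simp
      · intro s
        have h1 := ((hasDerivAt_pow (j+2) s).const_mul Λ).div_const ((j+2).factorial : ℝ)
        refine h1.congr_deriv ?_
        have hfac : ((j+2).factorial : ℝ) = ((j+2 : ℕ) : ℝ) * ((j+1).factorial : ℝ) := by
          rw [Nat.factorial_succ (j+1)]
          push_cast
          ring
        rw [hfac]
        have hne : ((j+2) : ℝ) ≠ 0 := by positivity
        have hne2 : ((j+1).factorial : ℝ) ≠ 0 := by positivity
        field_simp
        rw [show j + 2 - 1 = j + 1 by omega]
      · intro s hs
        rw [Real.norm_eq_abs]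
        exact ih (by omega) s (Ico_subset_Icc_self hs)
  have hfin := hInd (p-1) (by omega) 1 (by norm_num)
  have e1 : p - (p-1) = 1 := by omega
  have e2 : p - 1 + 1 = p := by omega
  rw [e1, e2] at hfin
  have hR11 : R 1 1 = iteratedFDeriv ℝ 1 f (x + d) (fun _ => d)
      - ∑ j ∈ Finset.Icc 1 p, iteratedFDeriv ℝ j f x (fun _ => d) / ((j-1).factorial : ℝ) := by
    simp [hRdef, hGdef, one_smul, zero_smul]
  rw [hR11] at hfin
  simpa using hfin

/-- The `p`-th order Taylor polynomial `Ω_p(f,x;y)` of `f` at `x`, evaluated at `y`. -/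
noncomputable def OmegaTaylor {E : Type*} [NormedAddCommGroup E] [InnerProductSpace ℝ E]
    (p : ℕ) (f : E → ℝ) (x y : E) : ℝ :=
  ∑ k ∈ Finset.range (p + 1),
    (1 / (Nat.factorial k : ℝ)) * iteratedFDeriv ℝ k f x (fun _ => y - x)

/-- `g` is a subgradient of `φ` at `z`, relative to the set `s`. -/
def IsSubgradOn {E : Type*} [NormedAddCommGroup E] [InnerProductSpace ℝ E]
    (s : Set E) (φ : E → ℝ) (g z : E) : Prop :=
  ∀ y ∈ s, φ z + ⟪g, y - z⟫ ≤ φ y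

lemma model_hasFDerivAt {E : Type*} [NormedAddCommGroup E] [InnerProductSpace ℝ E]
    (p : ℕ) (hp : 2 ≤ p) (f : E → ℝ) (x T : E) (hxT : T - x ≠ 0) (c : ℝ) :
    ∃ ℓ : E →L[ℝ] ℝ,
      HasFDerivAt (fun y => OmegaTaylor p f x y + c * ‖y - x‖ ^ (p+1)) ℓ T ∧
      ℓ (T - x) = (∑ k ∈ Finset.range (p+1),
          ((k : ℝ) / (k.factorial : ℝ)) * iteratedFDeriv ℝ k f x (fun _ => T - x))
        + c * (p+1) * ‖T - x‖ ^ (p+1) := by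
  set d := T - x with hd
  -- diagonal map derivative
  have hsub : HasFDerivAt (fun y : E => y - x) (ContinuousLinearMap.id ℝ E) T :=
    (hasFDerivAt_id T).sub_const x
  -- each Taylor term
  have htermA : ∀ k : ℕ, HasFDerivAt
      (fun y : E => (1 / (k.factorial : ℝ)) * iteratedFDeriv ℝ k f x (fun _ => y - x))
      ((1 / (k.factorial : ℝ)) •
        ((iteratedFDeriv ℝ k f x).linearDeriv (fun _ => d)).comp
          (ContinuousLinearMap.pi fun _ : Fin k => ContinuousLinearMap.id ℝ E)) T := by
    intro k
    have hdiag : HasFDerivAt (fun y : E => (fun _ : Fin k => y - x))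
        (ContinuousLinearMap.pi fun _ : Fin k => ContinuousLinearMap.id ℝ E) T := by
      have := (ContinuousLinearMap.pi fun _ : Fin k =>
        ContinuousLinearMap.id ℝ E).hasFDerivAt (x := T - x)
      have h2 := this.comp T hsub
      simpa [Function.comp] using h2
    have hM := (iteratedFDeriv ℝ k f x).hasFDerivAt (x := fun _ : Fin k => d)
    have h3 := hM.comp T hdiag
    exact (h3.const_mul _)
  have hA : HasFDerivAt (fun y => OmegaTaylor p f x y)
      (∑ k ∈ Finset.range (p+1), (1 / (k.factorial : ℝ)) •
        ((iteratedFDeriv ℝ k f x).linearDeriv (fun _ => d)).comp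
          (ContinuousLinearMap.pi fun _ : Fin k => ContinuousLinearMap.id ℝ E)) T := by
    unfold OmegaTaylor
    exact HasFDerivAt.fun_sum (fun k _ => htermA k)
  -- regularizer derivative
  have hnorm2 : HasFDerivAt (fun y : E => ⟪y - x, y - x⟫)
      ((fderivInnerCLM ℝ (d, d)).comp
        ((ContinuousLinearMap.id ℝ E).prod (ContinuousLinearMap.id ℝ E))) T :=
    HasFDerivAt.inner ℝ hsub hsub
  have hdd : ⟪d, d⟫ = ‖d‖ ^ 2 := real_inner_self_eq_norm_sq d
  have hdpos : (0:ℝ) < ‖d‖ := norm_pos_iff.mpr hxT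
  have hddpos : (0:ℝ) < ⟪d, d⟫ := by rw [hdd]; positivity
  have hrpow : HasDerivAt (fun s : ℝ => s ^ (((p:ℝ)+1)/2))
      ((((p:ℝ)+1)/2) * (⟪d, d⟫) ^ (((p:ℝ)+1)/2 - 1)) (⟪d, d⟫) :=
    Real.hasDerivAt_rpow_const (Or.inl (ne_of_gt hddpos))
  have hcompB : HasFDerivAt (fun y : E => (⟪y - x, y - x⟫) ^ (((p:ℝ)+1)/2))
      (((((p:ℝ)+1)/2) * (⟪d, d⟫) ^ (((p:ℝ)+1)/2 - 1)) •
        ((fderivInnerCLM ℝ (d, d)).comp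
          ((ContinuousLinearMap.id ℝ E).prod (ContinuousLinearMap.id ℝ E)))) T :=
    by have := hrpow.comp_hasFDerivAt T hnorm2; exact this
  have hfun : (fun y : E => (⟪y - x, y - x⟫) ^ (((p:ℝ)+1)/2))
      = (fun y : E => ‖y - x‖ ^ (p+1)) := by
    funext y
    rw [real_inner_self_eq_norm_sq]
    have h0 : (0:ℝ) ≤ ‖y - x‖ := norm_nonneg _
    have h1 : (‖y - x‖ ^ 2 : ℝ) ^ (((p:ℝ)+1)/2) = ‖y - x‖ ^ ((p:ℝ)+1) := by
      rw [← Real.rpow_natCast ‖y - x‖ 2, ← Real.rpow_mul h0]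
      congr 1
      push_cast
      ring
    rw [h1, show ((p:ℝ)+1) = ((p+1 : ℕ) : ℝ) by push_cast; ring, Real.rpow_natCast]
  rw [hfun] at hcompB
  have hB := hcompB.const_mul c
  refine ⟨_, (hA.add hB), ?_⟩
  -- value at d
  rw [ContinuousLinearMap.add_apply]
  congr 1
  · rw [ContinuousLinearMap.sum_apply]
    refine Finset.sum_congr rfl (fun k _ => ?_)
    rw [ContinuousLinearMap.smul_apply, ContinuousLinearMap.comp_apply]
    have h1 : (ContinuousLinearMap.pi fun _ : Fin k => ContinuousLinearMap.id ℝ E) d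
        = (fun _ : Fin k => d) := by
      ext i; simp
    rw [h1, ContinuousMultilinearMap.linearDeriv_apply]
    have h2 : ∀ i : Fin k, Function.update (fun _ : Fin k => d) i d = (fun _ : Fin k => d) := by
      intro i
      exact Function.update_eq_self i _
    simp only [h2]
    rw [Finset.sum_const, Finset.card_univ, Fintype.card_fin]
    simp only [smul_eq_mul, nsmul_eq_mul]
    ring
  · rw [ContinuousLinearMap.smul_apply, ContinuousLinearMap.smul_apply,
      ContinuousLinearMap.comp_apply]
    simp only [ContinuousLinearMap.prod_apply, ContinuousLinearMap.coe_id', id_eq,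
      fderivInnerCLM_apply, smul_eq_mul]
    have h0 : (0:ℝ) ≤ ‖d‖ := norm_nonneg _
    have e1 : (⟪d, d⟫ : ℝ) ^ (((p:ℝ)+1)/2 - 1) = ‖d‖ ^ ((p:ℝ) - 1) := by
      rw [hdd, ← Real.rpow_natCast ‖d‖ 2, ← Real.rpow_mul h0]
      congr 1
      push_cast
      ring
    have e2 : ‖d‖ ^ ((p:ℝ) - 1) * ‖d‖^2 = ‖d‖ ^ (p+1) := by
      rw [← Real.rpow_natCast ‖d‖ 2, ← Real.rpow_add hdpos,
        show (p:ℝ) - 1 + (2:ℕ) = ((p+1:ℕ):ℝ) by push_cast; ring,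
        Real.rpow_natCast]
    calc c * ((((p:ℝ)+1)/2) * (⟪d, d⟫) ^ (((p:ℝ)+1)/2 - 1) * (⟪d, d⟫ + ⟪d, d⟫))
        = c * ((p:ℝ)+1) * ((⟪d, d⟫) ^ (((p:ℝ)+1)/2 - 1) * ⟪d, d⟫) := by ring
      _ = c * ((p:ℝ)+1) * (‖d‖ ^ ((p:ℝ) - 1) * ‖d‖^2) := by rw [e1, hdd]
      _ = c * ((p:ℝ)+1) * ‖d‖ ^ (p+1) := by rw [e2]
      _ = c * (↑p+1) * ‖d‖ ^ (p+1) := by norm_num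

end Auxiliary

/-- if `F = f + h` is uniformly convex of degree `q ≥ 2` with parameter
`σ_q > 0`, `H = βL_p` with `β > 1`, and `T` is a tensor step from `x ∈ dom h`, then
every subgradient `g ∈ ∂h(x)` satisfies `‖∇f(x) + g‖ ≥ σ_q ‖x − T‖^{q−1}`
(hence `η(x) ≥ σ_q ‖x − T‖^{q−1}`). -/
theorem rcts_step_subgradient_lower_bound
    {E : Type*} [NormedAddCommGroup E] [InnerProductSpace ℝ E] [FiniteDimensional ℝ E]
    (p : ℕ) (hp : 2 ≤ p) (f h F : E → ℝ) (domh U : Set E)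
    (hdomcl : IsClosed domh) (hU : IsOpen U) (hUconv : Convex ℝ U) (hsub : domh ⊆ U)
    (hf : ContDiffOn ℝ (p : ℕ∞) f U) (hfconv : ConvexOn ℝ U f)
    (hhconv : ConvexOn ℝ domh h) (hhlsc : LowerSemicontinuousOn h domh)
    (hF : ∀ z, F z = f z + h z)
    (Lp H β : ℝ) (hLp : 0 < Lp) (hβ : 1 < β) (hH : H = β * Lp)
    (hLip : ∀ z ∈ domh, ∀ w ∈ domh,
      ‖iteratedFDeriv ℝ p f z - iteratedFDeriv ℝ p f w‖ ≤ Lp * ‖z - w‖)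
    (q σ : ℝ) (hq : 2 ≤ q) (hσ : 0 < σ)
    (huc : ∀ z ∈ domh, ∀ w ∈ domh, ∀ Gz Gw : E,
      IsSubgradOn domh F Gz z → IsSubgradOn domh F Gw w →
      σ * ‖z - w‖ ^ q ≤ ⟪Gz - Gw, z - w⟫)
    (x : E) (hx : x ∈ domh) (T : E) (hT : T ∈ domh)
    (hmin : ∀ y ∈ domh,
      OmegaTaylor p f x T + H / (Nat.factorial (p + 1) : ℝ) * ‖T - x‖ ^ (p + 1) + h T ≤
        OmegaTaylor p f x y + H / (Nat.factorial (p + 1) : ℝ) * ‖y - x‖ ^ (p + 1) + h y) :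
    ∀ g : E, IsSubgradOn domh h g x →
      σ * ‖x - T‖ ^ (q - 1) ≤ ‖gradient f x + g‖ := by
  intro g hg
  classical
  have hfd : ∀ z ∈ U, DifferentiableAt ℝ f z := fun z hz =>
    ((hf.differentiableOn (by exact_mod_cast (show p ≠ 0 by omega))) z hz).differentiableAt
      (hU.mem_nhds hz)
  have hxU : x ∈ U := hsub hx
  have hTU : T ∈ U := hsub hT
  have hgradinner : ∀ z v : E, ⟪gradient f z, v⟫ = fderiv ℝ f z v := by
    intro z v
    exact InnerProductSpace.toDual_symm_apply
  -- Gx = ∇f(x) + g is a subgradient of F at x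
  have hGx : IsSubgradOn domh F (gradient f x + g) x := by
    intro y hy
    have h1 := fderiv_le_of_convexOn hUconv hfconv hxU (hsub hy) (hfd x hxU)
    have h2 := hg y hy
    have h3 : ⟪gradient f x + g, y - x⟫ = fderiv ℝ f x (y - x) + ⟪g, y - x⟫ := by
      rw [inner_add_left, hgradinner]
    simp only [hF]
    rw [h3]
    linarith
  by_cases hTx : T = x
  · have h0 : ‖x - T‖ = 0 := by rw [hTx]; simp
    rw [h0, Real.zero_rpow (by linarith : q - 1 ≠ 0)]
    simp only [mul_zero]
    exact norm_nonneg _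
  have hd0 : T - x ≠ 0 := sub_ne_zero.mpr hTx
  obtain ⟨ℓ, hℓ, hℓd⟩ := model_hasFDerivAt p hp f x T hd0 (H / ((p+1).factorial : ℝ))
  set d := T - x with hddef
  set gT := -(InnerProductSpace.toDual ℝ E).symm ℓ with hgTdef
  have hinner_gT : ∀ v : E, ⟪gT, v⟫ = -(ℓ v) := by
    intro v
    rw [hgTdef, inner_neg_left, InnerProductSpace.toDual_symm_apply]
  -- gT is a subgradient of h at T (first-order optimality of the tensor step)
  have hghT : ∀ y ∈ domh, h T + ⟪gT, y - T⟫ ≤ h y := by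
    intro y hy
    set v := y - T with hvdef
    have hcurve : HasDerivAt (fun t : ℝ => T + t • v) v 0 := by
      simpa using ((hasDerivAt_id (0:ℝ)).smul_const v).const_add T
    have hρ : HasDerivAt (fun t : ℝ => OmegaTaylor p f x (T + t • v)
        + H / ((p+1).factorial : ℝ) * ‖(T + t • v) - x‖ ^ (p+1)) (ℓ v) 0 := by
      have hℓ' : HasFDerivAt (fun y => OmegaTaylor p f x y
          + H / ((p+1).factorial : ℝ) * ‖y - x‖ ^ (p+1)) ℓ (T + (0:ℝ) • v) := by
        simpa using hℓ
      exact hℓ'.comp_hasDerivAt 0 hcurve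
    have hK : h T - h y ≤ ℓ v := by
      refine deriv_ge_of_slope_ge hρ ?_
      intro t ht
      have hmem : T + t • v = (1 - t) • T + t • y := by
        rw [hvdef, smul_sub, sub_smul, one_smul]; abel
      have hyt : T + t • v ∈ domh := by
        rw [hmem]
        exact hhconv.1 hT hy (by linarith [ht.2]) (le_of_lt ht.1) (by ring)
      have h1 := hmin _ hyt
      have h2 : h (T + t • v) ≤ (1-t) * h T + t * h y := by
        rw [hmem]
        have := hhconv.2 hT hy (by linarith [ht.2] : (0:ℝ) ≤ 1 - t) (le_of_lt ht.1) (by ring)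
        simpa using this
      rw [le_div_iff₀ ht.1]
      have h00 : T + (0:ℝ) • v = T := by simp
      rw [h00]
      have hTT : T - x = d := rfl
      nlinarith [h1, h2]
    rw [hinner_gT]
    linarith
  -- GT = ∇f(T) + gT is a subgradient of F at T
  set GT := gradient f T + gT with hGTdef
  have hGT : IsSubgradOn domh F GT T := by
    intro y hy
    have h1 := fderiv_le_of_convexOn hUconv hfconv hTU (hsub hy) (hfd T hTU)
    have h2 := hghT y hy
    have h3 : ⟪GT, y - T⟫ = fderiv ℝ f T (y - T) + ⟪gT, y - T⟫ := by
      rw [hGTdef, inner_add_left, hgradinner]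
    simp only [hF]
    rw [h3]
    linarith
  -- uniform convexity between x and T
  have hucx := huc x hx T hT _ _ hGx hGT
  -- Taylor remainder bound along the segment
  have hsegd : ∀ t ∈ Set.Icc (0:ℝ) 1, x + t • d ∈ domh := by
    intro t ht
    have hmem : x + t • d = (1 - t) • x + t • T := by
      rw [hddef, smul_sub, sub_smul, one_smul]; abel
    rw [hmem]
    exact hhconv.1 hx hT (by linarith [ht.2]) ht.1 (by ring)
  have hsegU : ∀ t ∈ Set.Icc (0:ℝ) 1, x + t • d ∈ U := fun t ht => hsub (hsegd t ht)
  have hlip' : ∀ t ∈ Set.Icc (0:ℝ) 1,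
      |iteratedFDeriv ℝ p f (x + t • d) (fun _ => d)
        - iteratedFDeriv ℝ p f x (fun _ => d)| ≤ (Lp * ‖d‖ ^ (p+1)) * t := by
    intro t ht
    have h1 : |(iteratedFDeriv ℝ p f (x + t • d) - iteratedFDeriv ℝ p f x) (fun _ => d)|
        ≤ ‖iteratedFDeriv ℝ p f (x + t • d) - iteratedFDeriv ℝ p f x‖ * ‖d‖ ^ p := by
      have h2 := (iteratedFDeriv ℝ p f (x + t • d) - iteratedFDeriv ℝ p f x).le_opNorm
        (fun _ => d)
      calc |(iteratedFDeriv ℝ p f (x + t • d) - iteratedFDeriv ℝ p f x) (fun _ => d)|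
          ≤ ‖iteratedFDeriv ℝ p f (x + t • d) - iteratedFDeriv ℝ p f x‖
            * ∏ _i : Fin p, ‖d‖ := h2
        _ = ‖iteratedFDeriv ℝ p f (x + t • d) - iteratedFDeriv ℝ p f x‖ * ‖d‖ ^ p := by
            rw [Finset.prod_const, Finset.card_univ, Fintype.card_fin]
    have h3 := hLip (x + t • d) (hsegd t ht) x hx
    have h4 : ‖x + t • d - x‖ = t * ‖d‖ := by
      rw [add_sub_cancel_left, norm_smul, Real.norm_eq_abs, abs_of_nonneg ht.1]
    rw [h4] at h3
    have h5 : (0:ℝ) ≤ ‖d‖ ^ p := by positivity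
    have h6 : ContinuousMultilinearMap.sub_apply (iteratedFDeriv ℝ p f (x + t • d))
        (iteratedFDeriv ℝ p f x) (fun _ => d) = ContinuousMultilinearMap.sub_apply _ _ _ := rfl
    calc |iteratedFDeriv ℝ p f (x + t • d) (fun _ => d)
          - iteratedFDeriv ℝ p f x (fun _ => d)|
        = |(iteratedFDeriv ℝ p f (x + t • d) - iteratedFDeriv ℝ p f x) (fun _ => d)| := by
          rw [ContinuousMultilinearMap.sub_apply]
      _ ≤ ‖iteratedFDeriv ℝ p f (x + t • d) - iteratedFDeriv ℝ p f x‖ * ‖d‖ ^ p := h1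
      _ ≤ (Lp * (t * ‖d‖)) * ‖d‖ ^ p := by
          apply mul_le_mul_of_nonneg_right h3 h5
      _ = (Lp * ‖d‖ ^ (p+1)) * t := by rw [pow_succ]; ring
  have hrem := line_taylor_bound hU hp hf x d hsegU hlip'
  have hxd : x + d = T := by rw [hddef]; abel
  rw [hxd] at hrem
  have hG11 : iteratedFDeriv ℝ 1 f T (fun _ => d) = fderiv ℝ f T d :=
    iteratedFDeriv_one_apply _
  -- match the two sums
  have hSum_eq : (∑ k ∈ Finset.range (p+1),
        ((k : ℝ) / (k.factorial : ℝ)) * iteratedFDeriv ℝ k f x (fun _ => d))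
      = ∑ j ∈ Finset.Icc 1 p, iteratedFDeriv ℝ j f x (fun _ => d) / ((j-1).factorial : ℝ) := by
    rw [Finset.sum_range_succ']
    rw [show Finset.Icc 1 p = Finset.Ico 1 (p+1) from (Finset.Ico_add_one_right_eq_Icc 1 p).symm,
      Finset.sum_Ico_eq_sum_range]
    simp only [Nat.cast_zero, zero_div, zero_mul, add_zero]
    refine Finset.sum_congr (by norm_num) (fun k _ => ?_)
    have hfac : ((k+1).factorial : ℝ) = ((k+1 : ℕ) : ℝ) * (k.factorial : ℝ) := by
      rw [Nat.factorial_succ]; push_cast; ring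
    have e2 : (1 + k) = (k + 1) := by omega
    rw [e2, Nat.add_sub_cancel, hfac]
    have hne : ((k+1 : ℕ) : ℝ) ≠ 0 := Nat.cast_ne_zero.mpr (by omega)
    have hne2 : (k.factorial : ℝ) ≠ 0 := Nat.cast_ne_zero.mpr k.factorial_ne_zero
    field_simp
  -- key positivity: ⟪GT, x - T⟫ ≥ 0
  have hfacsucc : (((p+1).factorial : ℕ) : ℝ) = ((p+1 : ℕ) : ℝ) * (p.factorial : ℝ) := by
    rw [Nat.factorial_succ]; push_cast; ring
  have hpfacpos : (0:ℝ) < (p.factorial : ℝ) := by positivity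
  have hHval : H / ((p+1).factorial : ℝ) * ((p:ℝ)+1) * ‖d‖ ^ (p+1)
      = H / (p.factorial : ℝ) * ‖d‖ ^ (p+1) := by
    rw [hfacsucc]
    have hne : ((p+1 : ℕ) : ℝ) ≠ 0 := Nat.cast_ne_zero.mpr (by omega)
    field_simp
    push_cast; ring
  have hval : ⟪GT, x - T⟫ = -(fderiv ℝ f T d)
      + ((∑ j ∈ Finset.Icc 1 p, iteratedFDeriv ℝ j f x (fun _ => d) / ((j-1).factorial : ℝ))
        + H / (p.factorial : ℝ) * ‖d‖ ^ (p+1)) := by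
    have hxT' : x - T = -d := by rw [hddef]; abel
    rw [hGTdef, inner_add_left, hgradinner, hinner_gT, hxT', map_neg, map_neg]
    rw [hℓd, hSum_eq, ← hHval]
    ring
  have habs := abs_le.mp hrem
  have hHLp : Lp ≤ H := by nlinarith
  have hdp : (0:ℝ) ≤ ‖d‖ ^ (p+1) := by positivity
  have hkey : 0 ≤ ⟪GT, x - T⟫ := by
    rw [hval]
    have h1 := habs.2
    rw [hG11] at h1
    have h2 : Lp * ‖d‖ ^ (p+1) / (p.factorial : ℝ) ≤ H / (p.factorial : ℝ) * ‖d‖ ^ (p+1) := by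
      have h3 : Lp * ‖d‖ ^ (p+1) ≤ H * ‖d‖ ^ (p+1) := mul_le_mul_of_nonneg_right hHLp hdp
      calc Lp * ‖d‖ ^ (p+1) / (p.factorial : ℝ) ≤ H * ‖d‖ ^ (p+1) / (p.factorial : ℝ) := by
            gcongr
        _ = H / (p.factorial : ℝ) * ‖d‖ ^ (p+1) := by ring
    linarith
  -- conclude via Cauchy–Schwarz
  have hCS : ⟪gradient f x + g - GT, x - T⟫ ≤ ‖gradient f x + g‖ * ‖x - T‖ := by
    have h1 : ⟪gradient f x + g - GT, x - T⟫
        = ⟪gradient f x + g, x - T⟫ - ⟪GT, x - T⟫ := inner_sub_left _ _ _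
    have h2 := real_inner_le_norm (gradient f x + g) (x - T)
    linarith
  have hn : (0:ℝ) < ‖x - T‖ := by
    rw [norm_pos_iff, sub_ne_zero]
    exact fun hh => hTx hh.symm
  have hchain : σ * ‖x - T‖ ^ q ≤ ‖gradient f x + g‖ * ‖x - T‖ := le_trans hucx hCS
  have hq1 : ‖x - T‖ ^ q = ‖x - T‖ ^ (q - 1) * ‖x - T‖ := by
    have e := Real.rpow_add_one (ne_of_gt hn) (q - 1)
    rw [show q - 1 + 1 = q by ring] at e
    exact e
  rw [hq1] at hchain
  have := (mul_le_mul_iff_left₀ hn).mp (by linarith : (σ * ‖x - T‖ ^ (q-1)) * ‖x - T‖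
      ≤ ‖gradient f x + g‖ * ‖x - T‖)
  exact this
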